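/- If a finite directed dependency graph with distinct commit timestamps contains a directed cycle, then it contains an exclusion window violation: there exists an edge U ← T with π(T) ≤ c(U) < c(T), where π(T) = min{ c(V) : V reachable from T by back edges (reflexively) }. -/

import Mathlib

/-- A back edge `T ← U`: an edge whose source/successor `U` committed before `T`. -/
def BackEdge {V : Type*} (E : V → V → Prop) (c : V → ℝ) (T U : V) : Prop :=
  E T U ∧ c U < c T

/-- SSN low watermark `π(T)`: minimum commit time over the back-edge-reachable set of `T`. -/
noncomputable def piSSN {V : Type*} (E : V → V → Prop) (c : V → ℝ) (T : V) : ℝ :=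
  sInf (c '' {U | Relation.ReflTransGen (BackEdge E c) T U})

lemma piSSN_le {V : Type*} [Fintype V] (E : V → V → Prop) (c : V → ℝ) {T₀ W : V}
    (h : Relation.ReflTransGen (BackEdge E c) T₀ W) : piSSN E c T₀ ≤ c W := by
  apply csInf_le (Set.toFinite _).bddBelow
  exact ⟨W, h, rfl⟩

open Fin.NatCast

/-- Theorem 2 of the SSN paper: if a finite dependency graph with distinct commit
timestamps contains a directed cycle (`n ≥ 2` distinct vertices), then some edge
`U ← T` (i.e. `E U T`) violates an exclusion window: `π(T) ≤ c(U) < c(T)`. -/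
theorem cycle_implies_exclusion_window_violation {V : Type*} [Fintype V]
    (E : V → V → Prop) (c : V → ℝ) (hc : Function.Injective c)
    (n : ℕ) [NeZero n] (hn : 2 ≤ n) (T : Fin n → V) (hT : Function.Injective T)
    (hcyc : ∀ i : Fin n, E (T i) (T (i + 1))) :
    ∃ U T₀ : V, E U T₀ ∧ piSSN E c T₀ ≤ c U ∧ c U < c T₀ := by
  classical
  have hone : (1 : Fin n) ≠ 0 := by
    intro h
    have := Fin.one_eq_zero_iff.mp h
    omega
  obtain ⟨k, hk⟩ := Finite.exists_min (fun i : Fin n => c (T i))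
  have hk' : ∀ i : Fin n, c (T k) ≤ c (T i) := fun i => hk i
  -- For each `m`, either a violation exists, or `T k` is back-edge reachable from `T (k - m)`.
  have key : ∀ m : ℕ,
      (∃ U T₀ : V, E U T₀ ∧ piSSN E c T₀ ≤ c U ∧ c U < c T₀) ∨
      Relation.ReflTransGen (BackEdge E c) (T (k - (m : Fin n))) (T k) := by
    intro m
    induction m with
    | zero => exact Or.inr (by simpa using Relation.ReflTransGen.refl)
    | succ m ih =>
      rcases ih with h | h
      · exact Or.inl h
      · have hcast : (((m + 1 : ℕ)) : Fin n) = (m : Fin n) + 1 := by push_cast; ring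
        have hidx : k - (((m + 1 : ℕ)) : Fin n) = k - (m : Fin n) - 1 := by
          rw [hcast]; abel
        have hedge : E (T (k - (m : Fin n) - 1)) (T (k - (m : Fin n))) := by
          have := hcyc (k - (m : Fin n) - 1)
          simpa using this
        by_cases hlt : c (T (k - (m : Fin n))) < c (T (k - (m : Fin n) - 1))
        · right
          rw [hidx]
          exact Relation.ReflTransGen.head ⟨hedge, hlt⟩ h
        · left
          refine ⟨T (k - (m : Fin n) - 1), T (k - (m : Fin n)), hedge, ?_, ?_⟩
          · exact le_trans (piSSN_le E c h) (hk' _)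
          · have hne : T (k - (m : Fin n) - 1) ≠ T (k - (m : Fin n)) := by
              intro he
              have h1 := hT he
              have h2 : (1 : Fin n) = 0 := sub_eq_self.mp h1
              exact hone h2
            exact lt_of_le_of_ne (not_lt.mp hlt) (fun h' => hne (hc h'))
  rcases key (n - 1) with h | h
  · exact h
  · -- `(↑(n-1) : Fin n) = -1`, so `k - ↑(n-1) = k + 1`.
    have hn1 : (((n - 1 : ℕ)) : Fin n) = -1 := by
      have h0 : (((n - 1 : ℕ)) : Fin n) + 1 = 0 := by
        have : (((n - 1 : ℕ)) : Fin n) + 1 = (((n - 1 + 1 : ℕ)) : Fin n) := by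
          push_cast; ring
        rw [this, Nat.sub_add_cancel (by omega : 1 ≤ n), Fin.natCast_self]
      exact eq_neg_of_add_eq_zero_left h0
    have hidx : k - (((n - 1 : ℕ)) : Fin n) = k + 1 := by
      rw [hn1]; abel
    rw [hidx] at h
    refine ⟨T k, T (k + 1), hcyc k, piSSN_le E c h, ?_⟩
    have hne : T k ≠ T (k + 1) := by
      intro he
      have h1 := hT he
      have h2 : (1 : Fin n) = 0 := by
        have := h1.symm
        simpa [add_eq_left] using this
      exact hone h2
    exact lt_of_le_of_ne (hk' (k + 1)) (fun h' => hne (hc h'))
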